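/- Let A and B be n×n real symmetric positive definite matrices. Then the function Y ↦ tr(B Y) + tr(Y^{-1} A), defined on the set of n×n real symmetric positive definite matrices, attains its minimum at Y = M, where M = (B^{-1})^{1/2} ((B^{1/2} A B^{1/2})^{1/2}) (B^{-1})^{1/2}; that is, for every symmetric positive definite Y, tr(B Y) + tr(Y^{-1} A) ≥ tr(B M) + tr(M^{-1} A). -/

import Mathlib

open Matrix
open scoped MatrixOrder

lemma trace_transpose_mul_self_nonneg {n : ℕ} (X : Matrix (Fin n) (Fin n) ℝ) :
    0 ≤ (Xᵀ * X).trace := by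
  rw [Matrix.trace]
  refine Finset.sum_nonneg fun j _ => ?_
  simp only [Matrix.diag, Matrix.mul_apply, Matrix.transpose_apply]
  exact Finset.sum_nonneg fun i _ => mul_self_nonneg _

lemma key_ineq {n : ℕ} {S E : Matrix (Fin n) (Fin n) ℝ}
    (hS : S.PosDef) (hE : E.PosDef) :
    2 * E.trace ≤ S.trace + (S⁻¹ * (E * E)).trace := by
  set T := CFC.sqrt S with hT
  have hTsd : T.PosSemidef := (CFC.sqrt_nonneg S).posSemidef
  have hTT : T * T = S := CFC.sqrt_mul_sqrt_self S hS.posSemidef.nonneg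
  have hdetT : IsUnit T.det := by
    have h : T.det * T.det = S.det := by rw [← Matrix.det_mul, hTT]
    have hS0 : S.det ≠ 0 := hS.det_pos.ne'
    exact isUnit_iff_ne_zero.mpr (fun h0 => hS0 (by rw [← h, h0, zero_mul]))
  have hTsymm : Tᵀ = T := hTsd.isHermitian
  have hEsymm : Eᵀ = E := hE.isHermitian
  have hTinv : (T⁻¹)ᵀ = T⁻¹ := by rw [Matrix.transpose_nonsing_inv, hTsymm]
  have hTmul : T * T⁻¹ = 1 := Matrix.mul_nonsing_inv T hdetT
  have hTmul' : T⁻¹ * T = 1 := Matrix.nonsing_inv_mul T hdetT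
  have hSinv : S⁻¹ = T⁻¹ * T⁻¹ := by rw [← hTT, Matrix.mul_inv_rev]
  set X := T - T⁻¹ * E with hX
  have hXT : Xᵀ = T - E * T⁻¹ := by
    rw [hX, Matrix.transpose_sub, hTsymm, Matrix.transpose_mul, hTinv, hEsymm]
  have h1 : T * (T⁻¹ * E) = E := by rw [← Matrix.mul_assoc, hTmul, Matrix.one_mul]
  have h2 : E * T⁻¹ * T = E := by rw [Matrix.mul_assoc, hTmul', Matrix.mul_one]
  have h3 : E * T⁻¹ * (T⁻¹ * E) = E * S⁻¹ * E := by
    rw [hSinv]; simp only [Matrix.mul_assoc]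
  have expand : Xᵀ * X = S - E - E + E * S⁻¹ * E := by
    rw [hXT, hX, Matrix.sub_mul, Matrix.mul_sub, Matrix.mul_sub, hTT, h1, h2, h3]
    abel
  have htr : 0 ≤ (Xᵀ * X).trace := trace_transpose_mul_self_nonneg X
  rw [expand] at htr
  have hcyc : (E * S⁻¹ * E).trace = (S⁻¹ * (E * E)).trace := by
    rw [Matrix.trace_mul_comm (E * S⁻¹) E, ← Matrix.mul_assoc, Matrix.trace_mul_comm]
  simp only [Matrix.trace_add, Matrix.trace_sub] at htr
  rw [hcyc] at htr
  linarith

/-- For `n×n` real SPD matrices `A, B`, the function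
`Y ↦ tr(B Y) + tr(Y⁻¹ A)` on SPD matrices attains its minimum at
`M = (B⁻¹)^{1/2} ((B^{1/2} A B^{1/2})^{1/2}) (B⁻¹)^{1/2}` (square roots encoded via
their defining property as the unique SPD square roots: `C * C = B⁻¹`, `D * D = B`,
`E * E = D * A * D`, so `M = C * E * C`): for every SPD `Y`,
`tr(B M) + tr(M⁻¹ A) ≤ tr(B Y) + tr(Y⁻¹ A)`. -/
theorem trace_functional_min_at_kl_center
    {n : ℕ} (A B : Matrix (Fin n) (Fin n) ℝ)
    (hA : A.PosDef) (hB : B.PosDef)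
    (C : Matrix (Fin n) (Fin n) ℝ) (hC : C.PosDef) (hC2 : C * C = B⁻¹)
    (D : Matrix (Fin n) (Fin n) ℝ) (hD : D.PosDef) (hD2 : D * D = B)
    (E : Matrix (Fin n) (Fin n) ℝ) (hE : E.PosDef) (hE2 : E * E = D * A * D) :
    ∀ Y : Matrix (Fin n) (Fin n) ℝ, Y.PosDef →
      (B * (C * E * C)).trace + ((C * E * C)⁻¹ * A).trace ≤
        (B * Y).trace + (Y⁻¹ * A).trace := by
  intro Y hY
  have hdetD : IsUnit D.det := hD.isUnit.map detMonoidHom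
  have hdetE : IsUnit E.det := hE.isUnit.map detMonoidHom
  have hDmul : D * D⁻¹ = 1 := Matrix.mul_nonsing_inv D hdetD
  have hDmul' : D⁻¹ * D = 1 := Matrix.nonsing_inv_mul D hdetD
  have hEmul' : E⁻¹ * E = 1 := Matrix.nonsing_inv_mul E hdetE
  have hDherm : Dᴴ = D := hD.isHermitian
  have hcancel : ∀ X : Matrix (Fin n) (Fin n) ℝ, D * (D⁻¹ * X) = X := fun X => by
    rw [← Matrix.mul_assoc, hDmul, Matrix.one_mul]
  have hcancel' : ∀ X : Matrix (Fin n) (Fin n) ℝ, D⁻¹ * (D * X) = X := fun X => by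
    rw [← Matrix.mul_assoc, hDmul', Matrix.one_mul]
  -- C = D⁻¹
  have hCD : C = D⁻¹ := by
    refine (CFC.sq_eq_sq_iff C D⁻¹ hC.posSemidef.nonneg hD.inv.posSemidef.nonneg).mp ?_
    rw [pow_two, pow_two, hC2, ← hD2, Matrix.mul_inv_rev]
  -- left hand side equals 2 * tr E
  have hM1 : (B * (C * E * C)).trace = E.trace := by
    rw [hCD, ← hD2]
    have e1 : D * D * (D⁻¹ * E * D⁻¹) = D * (E * D⁻¹) := by
      simp only [Matrix.mul_assoc]; rw [hcancel]
    rw [e1, Matrix.trace_mul_comm, Matrix.mul_assoc, hDmul', Matrix.mul_one]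
  have hM2 : ((C * E * C)⁻¹ * A).trace = E.trace := by
    rw [hCD]
    have hinv : (D⁻¹ * E * D⁻¹)⁻¹ = D * E⁻¹ * D := by
      rw [Matrix.mul_inv_rev, Matrix.mul_inv_rev, Matrix.nonsing_inv_nonsing_inv D hdetD,
        Matrix.mul_assoc]
    rw [hinv]
    have e2 : D * E⁻¹ * D * A = D * (E⁻¹ * (D * A)) := by simp only [Matrix.mul_assoc]
    rw [e2, Matrix.trace_mul_comm]
    have e3 : E⁻¹ * (D * A) * D = E⁻¹ * (D * A * D) := by simp only [Matrix.mul_assoc]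
    rw [e3, ← hE2, ← Matrix.mul_assoc, hEmul', Matrix.one_mul]
  -- right hand side: substitution S = D Y D
  set S := D * Y * D with hSdef
  have hSpos : S.PosDef := by
    have hherm : S.IsHermitian := by
      rw [Matrix.IsHermitian, hSdef]
      simp only [Matrix.conjTranspose_mul, hDherm, hY.isHermitian.eq]
      rw [Matrix.mul_assoc]
    refine Matrix.PosDef.of_dotProduct_mulVec_pos hherm fun x hx => ?_
    have hx' : D *ᵥ x ≠ 0 := by
      intro h0
      apply hx
      have := congrArg (fun v => D⁻¹ *ᵥ v) h0
      simpa [Matrix.mulVec_mulVec, hDmul'] using this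
    have key : star x ⬝ᵥ S *ᵥ x = star (D *ᵥ x) ⬝ᵥ Y *ᵥ (D *ᵥ x) := by
      rw [Matrix.star_mulVec, hDherm, Matrix.mulVec_mulVec, ← Matrix.dotProduct_mulVec,
        Matrix.mulVec_mulVec, hSdef, Matrix.mul_assoc]
    rw [key]
    exact hY.dotProduct_mulVec_pos hx'
  have h1 : (B * Y).trace = S.trace := by
    rw [← hD2, hSdef, Matrix.mul_assoc, Matrix.trace_mul_comm]
  have h2 : (Y⁻¹ * A).trace = (S⁻¹ * (E * E)).trace := by
    have hSinv : S⁻¹ = D⁻¹ * Y⁻¹ * D⁻¹ := by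
      rw [hSdef, Matrix.mul_inv_rev, Matrix.mul_inv_rev, Matrix.mul_assoc]
    rw [hSinv, hE2]
    have e4 : D⁻¹ * Y⁻¹ * D⁻¹ * (D * A * D) = D⁻¹ * (Y⁻¹ * (A * D)) := by
      simp only [Matrix.mul_assoc]
      rw [hcancel']
    rw [e4, Matrix.trace_mul_comm D⁻¹]
    have e5 : Y⁻¹ * (A * D) * D⁻¹ = Y⁻¹ * (A * (D * D⁻¹)) := by simp only [Matrix.mul_assoc]
    rw [e5, hDmul, Matrix.mul_one]
  rw [hM1, hM2, h1, h2, ← two_mul]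
  exact key_ineq hSpos hE
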